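/- Let k be an integer with 1 ≤ k ≤ d and let x_0, …, x_{k−1} ∈ ℂ^{ℤ/dℤ}. For each p ∈ (ℤ/dℤ)² let u_p ∈ ℂ^k ⊗ ℂ^{ℤ/dℤ} (≅ ℂ^{kd}) be the stacked column vector u_p = Σ_{r=0}^{k−1} e_r ⊗ (D_p x_r), where e_r is the standard basis of ℂ^k. Then Σ_{p ∈ (ℤ/dℤ)²} |u_p⟩⟨u_p| = d·1_{kd} if and only if ⟨x_s, x_r⟩ = δ_{rs} for all 0 ≤ r, s ≤ k−1, i.e. the frame generated by the block matrix with blocks D_p x_r is tight if and only if the vectors x_r form an orthonormal set in ℂ^{ℤ/dℤ}. -/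

import Mathlib

open Matrix Complex

/-- `τ = -exp(iπ/d)`. -/
noncomputable def tau (d : ℕ) : ℂ := -Complex.exp (Real.pi * Complex.I / d)

/-- The displacement operator `D_p = D_{i,j}`, with `(r,s)` entry
`τ^{ij+2js} δ_{r,s+i}` (exponents of the `d`-th root of unity `τ` taken mod `d`). -/
noncomputable def Disp (d : ℕ) [NeZero d] (p : ZMod d × ZMod d) :
    Matrix (ZMod d) (ZMod d) ℂ :=
  Matrix.of fun r s =>
    tau d ^ ((p.1 * p.2 + 2 * p.2 * s).val) * (if r = s + p.1 then 1 else 0)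

/-- Rank-one projector `|x⟩⟨x|` as a matrix. -/
noncomputable def outer {n : Type*} [Fintype n] (x : n → ℂ) : Matrix n n ℂ :=
  Matrix.of fun i j => x i * star (x j)

/-- The standard Hermitian inner product `⟨x, y⟩`, antilinear in the first slot. -/
noncomputable def cInner {n : Type*} [Fintype n] (x y : n → ℂ) : ℂ :=
  ∑ k, star (x k) * y k

lemma tau_pow_d (d : ℕ) [NeZero d] (hodd : Odd d) : tau d ^ d = 1 := by
  have hd : (d : ℂ) ≠ 0 := Nat.cast_ne_zero.mpr (NeZero.ne d)
  have hcan : (d : ℂ) * ((Real.pi : ℂ) * Complex.I / d) = (Real.pi : ℂ) * Complex.I := by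
    field_simp
  rw [tau, neg_pow, ← Complex.exp_nat_mul, hcan, Complex.exp_pi_mul_I,
    hodd.neg_one_pow]
  norm_num

lemma tau_prim (d : ℕ) [NeZero d] (hodd : Odd d) : IsPrimitiveRoot (tau d) d := by
  have h1 := tau_pow_d d hodd
  have h2 : tau d ^ 2 = Complex.exp (2 * (Real.pi : ℂ) * Complex.I / d) := by
    rw [tau, neg_pow, ← Complex.exp_nat_mul]
    norm_num
    ring_nf
  refine ⟨h1, fun l hl => ?_⟩
  have hp := Complex.isPrimitiveRoot_exp d (NeZero.ne d)
  have hll : (Complex.exp (2 * (Real.pi : ℂ) * Complex.I / d)) ^ l = 1 := by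
    rw [← h2, ← pow_mul, mul_comm 2 l, pow_mul, hl, one_pow]
  exact hp.dvd_of_pow_eq_one l hll

lemma char_star (d : ℕ) [NeZero d] (h1 : tau d ^ d = 1) (t : ZMod d) :
    star (AddChar.zmodChar d h1 t) = AddChar.zmodChar d h1 (-t) := by
  set ψ := AddChar.zmodChar d h1
  have hmul : ψ t * ψ (-t) = 1 := by
    rw [← AddChar.map_add_eq_mul, add_neg_cancel, AddChar.map_zero_eq_one]
  have habs : ‖ψ t‖ = 1 := by
    have : ψ t = tau d ^ t.val := AddChar.zmodChar_apply h1 t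
    rw [this, norm_pow, tau]
    rw [norm_neg, Complex.norm_exp]
    have : ((Real.pi : ℂ) * Complex.I / d).re = 0 := by
      simp [Complex.div_re]
    rw [this, Real.exp_zero, one_pow]
  have hinv : (ψ t)⁻¹ = ψ (-t) := inv_eq_of_mul_eq_one_right hmul
  rw [← hinv, Complex.inv_eq_conj habs]
  rfl

lemma char_sum (d : ℕ) [NeZero d] (hodd : Odd d) (h1 : tau d ^ d = 1) (m : ZMod d) :
    ∑ j : ZMod d, AddChar.zmodChar d h1 (j * m) = if m = 0 then (d : ℂ) else 0 := by
  set ψ := AddChar.zmodChar d h1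
  by_cases hm : m = 0
  · simp [hm, AddChar.map_zero_eq_one, ZMod.card]
  · rw [if_neg hm]
    have hprim := AddChar.zmodChar_primitive_of_primitive_root d (tau_prim d hodd)
    have hne : AddChar.mulShift ψ m ≠ 1 := hprim hm
    calc ∑ j : ZMod d, ψ (j * m) = ∑ j : ZMod d, (AddChar.mulShift ψ m) j := by
          simp [AddChar.mulShift_apply, mul_comm]
      _ = 0 := AddChar.sum_eq_zero_of_ne_one hne

lemma disp_mulVec (d : ℕ) [NeZero d] (p : ZMod d × ZMod d) (v : ZMod d → ℂ) (a : ZMod d) :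
    (Disp d p).mulVec v a
      = tau d ^ ((p.1 * p.2 + 2 * p.2 * (a - p.1)).val) * v (a - p.1) := by
  unfold Disp Matrix.mulVec dotProduct
  simp only [Matrix.of_apply]
  rw [Finset.sum_eq_single (a - p.1)]
  · rw [if_pos (by ring), mul_one]
  · intro c _ hc
    rw [if_neg, mul_zero, zero_mul]
    intro h
    apply hc
    rw [h]; ring
  · intro h; exact absurd (Finset.mem_univ _) h

/-- The Weyl–Heisenberg covariant frame with stacked fiducial vector
`u = x_0 ⊕ ⋯ ⊕ x_{k-1}` is tight, i.e. `Σ_p |u_p⟩⟨u_p| = d·1_{kd}` where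
`u_p = Σ_r e_r ⊗ (D_p x_r)`, if and only if the vectors `x_r` form an
orthonormal set in `ℂ^{ℤ/dℤ}`. -/
theorem tight_frame_iff_orthonormal
    (d : ℕ) [NeZero d] (hodd : Odd d) (hd : 3 ≤ d)
    (k : ℕ) (hk1 : 1 ≤ k) (hkd : k ≤ d) (x : Fin k → ZMod d → ℂ) :
    (∑ p : ZMod d × ZMod d,
        outer (fun rs : Fin k × ZMod d => (Disp d p).mulVec (x rs.1) rs.2)
      = (d : ℂ) • (1 : Matrix (Fin k × ZMod d) (Fin k × ZMod d) ℂ)) ↔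
    (∀ r s : Fin k, cInner (x s) (x r) = if r = s then 1 else 0) := by
  have h1 : tau d ^ d = 1 := tau_pow_d d hodd
  set ψ : AddChar (ZMod d) ℂ := AddChar.zmodChar d h1 with hψdef
  have hψapp : ∀ t : ZMod d, ψ t = tau d ^ t.val := fun t => AddChar.zmodChar_apply h1 t
  have hdne : (d : ℂ) ≠ 0 := Nat.cast_ne_zero.mpr (NeZero.ne d)
  have two_cancel : ∀ y : ZMod d, 2 * y = 0 → y = 0 := by
    intro y hy
    obtain ⟨t, ht⟩ := hodd
    have h2 : ((t + 1 : ℕ) : ZMod d) * 2 = 1 := by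
      have hx : ((t + 1 : ℕ) : ZMod d) * 2 = ((d : ℕ) : ZMod d) + 1 := by
        push_cast [ht]; ring
      rw [hx, ZMod.natCast_self, zero_add]
    calc y = (((t + 1 : ℕ) : ZMod d) * 2) * y := by rw [h2, one_mul]
      _ = ((t + 1 : ℕ) : ZMod d) * (2 * y) := by ring
      _ = 0 := by rw [hy, mul_zero]
  have key : ∀ (r s : Fin k) (a b : ZMod d),
      (∑ p : ZMod d × ZMod d,
        outer (fun rs : Fin k × ZMod d => (Disp d p).mulVec (x rs.1) rs.2)) (r, a) (s, b)
      = if a = b then (d : ℂ) * cInner (x s) (x r) else 0 := by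
    intro r s a b
    rw [Matrix.sum_apply]
    have step1 : ∀ p : ZMod d × ZMod d,
        outer (fun rs : Fin k × ZMod d => (Disp d p).mulVec (x rs.1) rs.2) (r, a) (s, b)
        = ψ (p.2 * (2 * (a - b))) * (x r (a - p.1) * star (x s (b - p.1))) := by
      intro p
      show ((Disp d p).mulVec (x r) a) * star ((Disp d p).mulVec (x s) b) = _
      rw [disp_mulVec, disp_mulVec, ← hψapp, ← hψapp, star_mul', char_star d h1, ← hψdef]
      have hmul : ψ (p.1 * p.2 + 2 * p.2 * (a - p.1)) * ψ (-(p.1 * p.2 + 2 * p.2 * (b - p.1)))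
          = ψ (p.2 * (2 * (a - b))) := by
        rw [← AddChar.map_add_eq_mul]
        congr 1
        ring
      linear_combination (x r (a - p.1) * star (x s (b - p.1))) * hmul
    calc ∑ p : ZMod d × ZMod d,
          outer (fun rs : Fin k × ZMod d => (Disp d p).mulVec (x rs.1) rs.2) (r, a) (s, b)
        = ∑ p : ZMod d × ZMod d,
            ψ (p.2 * (2 * (a - b))) * (x r (a - p.1) * star (x s (b - p.1))) :=
          Finset.sum_congr rfl fun p _ => step1 p
      _ = ∑ i : ZMod d, ∑ j : ZMod d,
            ψ (j * (2 * (a - b))) * (x r (a - i) * star (x s (b - i))) := by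
          rw [Fintype.sum_prod_type]
      _ = ∑ i : ZMod d,
            (∑ j : ZMod d, ψ (j * (2 * (a - b)))) * (x r (a - i) * star (x s (b - i))) := by
          exact Finset.sum_congr rfl fun i _ => (Finset.sum_mul _ _ _).symm
      _ = (∑ j : ZMod d, ψ (j * (2 * (a - b)))) *
            ∑ i : ZMod d, x r (a - i) * star (x s (b - i)) :=
          (Finset.mul_sum _ _ _).symm
      _ = if a = b then (d : ℂ) * cInner (x s) (x r) else 0 := by
          rw [char_sum d hodd h1]
          by_cases hab : a = b
          · subst hab
            rw [if_pos (by ring), if_pos rfl]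
            congr 1
            rw [show cInner (x s) (x r) = ∑ c : ZMod d, x r c * star (x s c) from
              Finset.sum_congr rfl fun c _ => mul_comm _ _]
            exact Fintype.sum_equiv (Equiv.subLeft a) _ _ fun i => by
              simp [Equiv.subLeft]
          · rw [if_neg, if_neg hab, zero_mul]
            intro hzero
            exact hab (by have := two_cancel _ hzero; rwa [sub_eq_zero] at this)
  constructor
  · intro h r s
    have h2 := Matrix.ext_iff.mpr h (r, (0 : ZMod d)) (s, (0 : ZMod d))
    rw [key r s 0 0, if_pos rfl, Matrix.smul_apply, Matrix.one_apply, smul_eq_mul] at h2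
    have h3 := mul_left_cancel₀ hdne h2
    simpa [Prod.ext_iff] using h3
  · intro h
    ext ⟨r, a⟩ ⟨s, b⟩
    rw [key r s a b, Matrix.smul_apply, Matrix.one_apply, smul_eq_mul]
    by_cases hab : a = b
    · subst hab
      rw [if_pos rfl, h r s]
      simp [Prod.ext_iff]
    · rw [if_neg hab]
      have : ¬ ((r, a) = (s, b)) := by simp [Prod.ext_iff, hab]
      rw [if_neg this, mul_zero]
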